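/- For j, k ∈ H^m with wt(k) = 1, supp(k) ⊆ supp(j), and k agreeing with j on supp(k), the identity c_m(j) ⋆ d_m(k) = c_m(j) + c_m(j − k) holds in F_2^{n^m}, where ⋆ is the coordinatewise product. -/

import Mathlib

open scoped BigOperators

/-- The `l`-th block (of length `n^m`) of a vector of length `n^(m+1)`,
where the first coordinate of the index tuple selects the block. -/
def blockAt (n m : ℕ) (l : Fin n) (v : (Fin (m + 1) → Fin n) → ZMod 2) :
    (Fin m → Fin n) → ZMod 2 :=
  fun j => v (Fin.cons l j)

/-- Berman code `Ber_n^r(m) ⊆ F_2^{n^m}`, coordinates indexed by `H^m` with `H = Fin n`.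
`Ber_n^m(m) = {0}`, `Ber_n^0(m)` is the single parity-check code, and for `1 ≤ r`,
a codeword is a concatenation `(v_0|…|v_{n-1})` with each block in `Ber_n^{r-1}(m-1)`
and the sum of the blocks in `Ber_n^r(m-1)`. -/
def Ber (n : ℕ) : ℕ → (m : ℕ) → Set ((Fin m → Fin n) → ZMod 2)
  | _, 0 => {0}
  | 0, (m + 1) => {c | ∑ i, c i = 0}
  | (r + 1), (m + 1) =>
      {v | (∀ l : Fin n, blockAt n m l v ∈ Ber n r m) ∧
        (fun j => ∑ l : Fin n, v (Fin.cons l j)) ∈ Ber n (r + 1) m}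

/-- Dual Berman code `B_n^r(m) ⊆ F_2^{n^m}`.
`B_n^m(m)` is the full space, `B_n^0(m)` is the repetition code, and for `1 ≤ r`,
a codeword is `(u+u_0|…|u+u_{n-2}|u)` with each `u_l ∈ B_n^{r-1}(m-1)` and `u ∈ B_n^r(m-1)`. -/
def DBer (n : ℕ) : ℕ → (m : ℕ) → Set ((Fin m → Fin n) → ZMod 2)
  | _, 0 => Set.univ
  | 0, (m + 1) => {c | ∃ a : ZMod 2, c = fun _ => a}
  | (r + 1), (m + 1) =>
      {v | ∃ u ∈ DBer n (r + 1) m, ∃ w : Fin n → ((Fin m → Fin n) → ZMod 2),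
        (∀ l, w l ∈ DBer n r m) ∧
        (∀ l : Fin n, blockAt n m l v = if l.val = n - 1 then u else u + w l)}

/-- Star product of two codes: the span of all coordinatewise products. -/
def starProd {ι : Type*} (C D : Set (ι → ZMod 2)) : Submodule (ZMod 2) (ι → ZMod 2) :=
  Submodule.span (ZMod 2) {x | ∃ c ∈ C, ∃ d ∈ D, x = c * d}

/-- Dual code w.r.t. the standard bilinear form. -/
def dualCode {ι : Type*} [Fintype ι] (C : Set (ι → ZMod 2)) : Set (ι → ZMod 2) :=
  {x | ∀ c ∈ C, ∑ i, x i * c i = 0}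

/-- Partial order on tuples: `j ⪯ i` iff `supp(j) ⊆ supp(i)` and `j` agrees with `i` on
`supp(j)`. -/
def preceq {n m : ℕ} (j i : Fin m → Fin n) : Prop :=
  ∀ s, (j s).val ≠ 0 → j s = i s

instance {n m : ℕ} (j i : Fin m → Fin n) : Decidable (preceq j i) := by
  unfold preceq; infer_instance

/-- Hamming weight of a tuple in `H^m`: the number of nonzero entries. -/
def tupleWt {n m : ℕ} (j : Fin m → Fin n) : ℕ :=
  (Finset.univ.filter fun s => (j s).val ≠ 0).card

/-- The vector `c_m(i')`, the indicator of `{i : i ⪯ i'}`. -/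
def cm {n m : ℕ} (i' : Fin m → Fin n) : (Fin m → Fin n) → ZMod 2 :=
  fun i => if preceq i i' then 1 else 0

/-- The vector `d_m(i')`, the indicator of `{i : i ⪰ i'}`. -/
def dm {n m : ℕ} (i' : Fin m → Fin n) : (Fin m → Fin n) → ZMod 2 :=
  fun i => if preceq i' i then 1 else 0

/-- Standard basis vector of `F_2^{n^m}` at coordinate `v`. -/
def eVec {n m : ℕ} (v : Fin m → Fin n) : (Fin m → Fin n) → ZMod 2 :=
  fun i => if i = v then 1 else 0

/-- for `wt(k) = 1` with `k ⪯ j`,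
`c_m(j) ⋆ d_m(k) = c_m(j) + c_m(j - k)`, where `j - k` zeroes out `j` on `supp(k)`. -/
theorem stmt12 (n m : ℕ) [NeZero n] (hn : 2 ≤ n) (j k : Fin m → Fin n)
    (hwt : tupleWt k = 1) (hkj : preceq k j) :
    cm j * dm k = cm j + cm (fun s => if (k s).val ≠ 0 then 0 else j s) := by
  obtain ⟨s0, hs0⟩ := Finset.card_eq_one.mp hwt
  have hmem : ∀ s : Fin m, (k s).val ≠ 0 ↔ s = s0 := by
    intro s
    constructor
    · intro h
      have : s ∈ Finset.univ.filter fun s => (k s).val ≠ 0 := by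
        simp only [Finset.mem_filter, Finset.mem_univ, true_and]; exact h
      rw [hs0] at this; simpa using this
    · rintro rfl
      have : s ∈ ({s} : Finset (Fin m)) := Finset.mem_singleton_self s
      rw [← hs0] at this
      simpa using this
  have hk0 : (k s0).val ≠ 0 := (hmem s0).mpr rfl
  have hkzero : ∀ s, s ≠ s0 → k s = 0 := by
    intro s hs
    have := mt (hmem s).mp hs
    simp only [ne_eq, not_not] at this
    exact Fin.ext this
  have hjk : k s0 = j s0 := hkj s0 hk0
  set j' : Fin m → Fin n := fun s => if (k s).val ≠ 0 then 0 else j s with hj'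
  have hj's0 : j' s0 = 0 := if_pos hk0
  have hj'other : ∀ s, s ≠ s0 → j' s = j s := by
    intro s hs
    have : (k s).val = 0 := by rw [hkzero s hs]; rfl
    exact if_neg (not_not.mpr this)
  -- i ⪯ j' → i ⪯ j and i s0 = 0
  have key1 : ∀ i : Fin m → Fin n, preceq i j' → preceq i j ∧ i s0 = 0 := by
    intro i hi
    have hi0 : i s0 = 0 := by
      by_contra h
      have hv : (i s0).val ≠ 0 := fun hv => h (Fin.ext hv)
      have := hi s0 hv
      rw [hj's0] at this
      exact h this
    refine ⟨?_, hi0⟩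
    intro s hs
    have hss0 : s ≠ s0 := by
      intro h; subst h; rw [hi0] at hs; simp at hs
    rw [hi s hs, hj'other s hss0]
  -- i ⪯ j and i s0 ≠ 0 → k ⪯ i
  have key2 : ∀ i : Fin m → Fin n, preceq i j → (i s0).val ≠ 0 → preceq k i := by
    intro i hi hv s hs
    have hss : s = s0 := (hmem s).mp hs
    subst hss
    rw [hjk, hi s hv]
  -- i ⪯ j and ¬ k ⪯ i → i ⪯ j'
  have key3 : ∀ i : Fin m → Fin n, preceq i j → ¬ preceq k i → preceq i j' := by
    intro i hi hki
    have hi0 : (i s0).val = 0 := by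
      by_contra h
      exact hki (key2 i hi h)
    intro s hs
    have hss0 : s ≠ s0 := by rintro rfl; exact hs hi0
    rw [hj'other s hss0]
    exact hi s hs
  funext i
  simp only [Pi.mul_apply, Pi.add_apply, cm, dm]
  split_ifs with h1 h2 h3 h3 h2 h3 h3
  · -- i ⪯ j, k ⪯ i, i ⪯ j' : contradiction
    exfalso
    have hv : (i s0).val ≠ 0 := by
      have := h2 s0 hk0
      rw [← this]; exact hk0
    rw [(key1 i h3).2] at hv
    simp at hv
  · norm_num
  · decide
  · exact absurd (key3 i h1 h2) h3
  · exact absurd (key1 i h3).1 h1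
  · decide
  · exact absurd (key1 i h3).1 h1
  · decide
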